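/- Let R ⊆ S be an extension of commutative Noetherian rings of prime characteristic p such that R is a direct summand of S as an R-module (i.e., the inclusion R → S splits as a map of R-modules). If S is F-regular, then R is F-regular. -/

import Mathlib

/-- The `q`-th Frobenius power `I^{[q]}` of an ideal `I`: the ideal generated by
`q`-th powers of elements of `I`. -/
def Ideal.frobeniusPower {R : Type*} [CommRing R] (I : Ideal R) (q : ℕ) : Ideal R :=
  Ideal.span ((fun x => x ^ q) '' (I : Set R))

/-- `R°`: the set of elements of `R` not contained in any minimal prime of `R`. -/
def primeComplement (R : Type*) [CommRing R] : Set R :=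
  { c | ∀ P ∈ minimalPrimes R, c ∉ P }

/-- The tight closure `I*` of an ideal `I` in a ring of characteristic `p`:
elements `z` such that `c * z ^ (p ^ e) ∈ I ^ [p ^ e]` for some `c ∈ R°`
and all sufficiently large `e`. -/
def tightClosure (p : ℕ) {R : Type*} [CommRing R] (I : Ideal R) : Set R :=
  { z | ∃ c ∈ primeComplement R, ∃ N : ℕ, ∀ e : ℕ, N ≤ e →
      c * z ^ p ^ e ∈ I.frobeniusPower (p ^ e) }

/-- Tight closure commutes with localization in `R`: for every ideal `I` and
multiplicative set `U`, `I* · R[U⁻¹] = (I · R[U⁻¹])*`. -/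
def TightClosureCommutesWithLocalization (p : ℕ) (R : Type*) [CommRing R] : Prop :=
  ∀ (I : Ideal R) (U : Submonoid R),
    (Ideal.map (algebraMap R (Localization U)) (Ideal.span (tightClosure p I)) :
        Set (Localization U))
      = tightClosure p (Ideal.map (algebraMap R (Localization U)) I)

/-- A ring is F-regular if every ideal is tightly closed, both in the ring itself
and in all of its localizations. -/
def FRegular (p : ℕ) (S : Type*) [CommRing S] : Prop :=
  (∀ I : Ideal S, tightClosure p I = (I : Set S)) ∧
    ∀ (U : Submonoid S) (J : Ideal (Localization U)),
      tightClosure p J = (J : Set (Localization U))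

section Helpers

variable {W : Type*} [CommRing W]

lemma fp_mem {I : Ideal W} {x : W} (hx : x ∈ I) (q : ℕ) : x ^ q ∈ I.frobeniusPower q :=
  Ideal.subset_span ⟨x, hx, rfl⟩

lemma fp_mono {I K : Ideal W} (h : I ≤ K) (q : ℕ) :
    I.frobeniusPower q ≤ K.frobeniusPower q :=
  Ideal.span_mono (Set.image_mono h)

lemma fp_map {A : Type*} [CommRing A] (ι : A →+* W) (I : Ideal A) (q : ℕ) :
    Ideal.map ι (I.frobeniusPower q) ≤ (Ideal.map ι I).frobeniusPower q := by
  rw [Ideal.frobeniusPower, Ideal.map_span]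
  refine Ideal.span_le.2 ?_
  rintro _ ⟨_, ⟨x, hx, rfl⟩, rfl⟩
  rw [map_pow]
  exact fp_mem (Ideal.mem_map_of_mem ι hx) q

lemma one_mem_primeComplement : (1 : W) ∈ primeComplement W :=
  fun P hP h1 => hP.1.1.ne_top (Ideal.eq_top_iff_one P |>.2 h1)

lemma subset_tightClosure (p : ℕ) (I : Ideal W) : (I : Set W) ⊆ tightClosure p I := by
  intro z hz
  exact ⟨1, one_mem_primeComplement, 0, fun e _ => by
    rw [one_mul]; exact fp_mem hz _⟩

lemma eq_zero_of_mem_all_minimalPrimes [IsReduced W] {x : W}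
    (h : ∀ Q ∈ minimalPrimes W, x ∈ Q) : x = 0 := by
  have hx : x ∈ nilradical W := by
    rw [nilradical_eq_sInf, Submodule.mem_sInf]
    intro P hP
    haveI : Ideal.IsPrime P := hP
    obtain ⟨Q, hQ, hQP⟩ := Ideal.exists_minimalPrimes_le (I := ⊥) (J := P) bot_le
    exact hQP (h Q hQ)
  rw [nilradical_eq_zero] at hx
  simpa using hx

lemma sInf_le_prime_exists {s : Set (Ideal W)} (hfin : s.Finite) {π : Ideal W}
    (hπ : π.IsPrime) (h : sInf s ≤ π) : ∃ Q ∈ s, Q ≤ π := by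
  lift s to Finset (Ideal W) using hfin
  have : s.inf id ≤ π := by
    refine le_trans (le_sInf ?_) h
    intro b hb
    exact s.inf_le (by simpa using hb)
  obtain ⟨i, his, hle⟩ := (Ideal.IsPrime.inf_le' hπ).1 this
  exact ⟨i, by simpa using his, hle⟩

end Helpers

section TC

variable (p : ℕ) [Fact p.Prime] {T : Type*} [CommRing T]

lemma isReduced_of_tc (hT : ∀ J : Ideal T, tightClosure p J = (J : Set T)) :
    IsReduced T := by
  constructor
  intro x hx
  obtain ⟨n, hn⟩ := hx
  have hx2 : x ∈ tightClosure p (⊥ : Ideal T) := by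
    refine ⟨1, one_mem_primeComplement, n, fun e he => ?_⟩
    have hq : n ≤ p ^ e := by
      have h1 : n < 2 ^ e := lt_of_le_of_lt he (Nat.lt_two_pow_self (n := e))
      have h2 : 2 ^ e ≤ p ^ e := Nat.pow_le_pow_left (Fact.out : p.Prime).two_le e
      omega
    have : x ^ p ^ e = 0 := by
      have := pow_eq_zero_of_le hq hn
      exact this
    rw [one_mul, this]
    exact Ideal.zero_mem _
  rw [hT ⊥] at hx2
  simpa using hx2

variable [IsNoetherianRing T]

lemma idem_pow {f : T} (hf : f * f = f) {q : ℕ} (hq : 1 ≤ q) : f ^ q = f := by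
  induction q with
  | zero => omega
  | succ n ih =>
    rcases Nat.eq_or_lt_of_le hq with h | h
    · simp [← h]
    · have hn : 1 ≤ n := by omega
      rw [pow_succ, ih hn, hf]

lemma add_mul_pow_eq {a b : T} (hab : a * b = 0) {q : ℕ} (hq : 1 ≤ q) :
    (a + b) * a ^ q = a ^ (q + 1) := by
  rcases Nat.exists_eq_add_of_le hq with ⟨k, hk⟩
  rw [hk, show (a + b) * a ^ (1 + k) = a ^ (1 + k + 1) + (a * b) * a ^ k by ring, hab]
  ring

lemma mul_add_pow_eq {a b : T} (hab : a * b = 0) {q : ℕ} (hq : 1 ≤ q) :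
    a * (a + b) ^ q = a ^ (q + 1) := by
  induction q with
  | zero => omega
  | succ n ih =>
    rcases Nat.eq_or_lt_of_le hq with h | h
    · rw [← h]; ring_nf; rw [hab]; ring
    · have hn : 1 ≤ n := by omega
      have expand : a * (a + b) ^ (n + 1) = (a * (a + b) ^ n) * (a + b) := by ring
      rw [expand, ih hn]
      have hb0 : a ^ (n + 1) * b = 0 := by
        rcases Nat.exists_eq_add_of_le hn with ⟨k, hk⟩
        rw [hk, show a ^ (1 + k + 1) * b = (a * b) * a ^ (k+1) by ring, hab, zero_mul]
      rw [mul_add, hb0, add_zero, ← pow_succ]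

/-- Distinct minimal primes cannot both lie under a common prime,
in a ring in which every ideal is tightly closed. -/
lemma unique_minimal_le (hT : ∀ J : Ideal T, tightClosure p J = (J : Set T))
    {π P₁ P₂ : Ideal T} (hπ : π.IsPrime) (h1 : P₁ ∈ minimalPrimes T)
    (h2 : P₂ ∈ minimalPrimes T) (hle1 : P₁ ≤ π) (hle2 : P₂ ≤ π) : P₁ = P₂ := by
  by_contra hne
  haveI := isReduced_of_tc p hT
  have hMfin : (minimalPrimes T).Finite := minimalPrimes.finite_of_isNoetherianRing T
  set M' : Set (Ideal T) := minimalPrimes T \ {P₁} with hM'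
  have hM'fin : M'.Finite := hMfin.subset Set.diff_subset
  -- a ∈ sInf M' \ P₁
  have hsInf : ¬ sInf M' ≤ P₁ := by
    intro hle
    obtain ⟨Q, hQ, hQle⟩ := sInf_le_prime_exists hM'fin h1.1.1 hle
    have : P₁ ≤ Q := h1.2 ⟨hQ.1.1.1, bot_le⟩ hQle
    exact hQ.2 (by simp [le_antisymm hQle this])
  obtain ⟨a, ha, haP₁⟩ := SetLike.not_le_iff_exists.1 hsInf
  -- b ∈ P₁ \ ⋃ M'
  have hinj : Function.Injective (fun Q : Ideal T => Q) := fun _ _ h => h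
  have hbexists : ¬ ((P₁ : Set T) ⊆ ⋃ Q ∈ hM'fin.toFinset, (Q : Set T)) := by
    intro hsub
    have := (Ideal.subset_union_prime (f := fun Q : Ideal T => Q) P₁ P₁
      (fun Q hQ _ _ => by
        rw [Set.Finite.mem_toFinset] at hQ
        exact hQ.1.1.1)).1 hsub
    obtain ⟨Q, hQ, hle⟩ := this
    rw [Set.Finite.mem_toFinset] at hQ
    have hQP : Q ≤ P₁ := hQ.1.2 ⟨h1.1.1, bot_le⟩ hle
    exact hQ.2 (by simp [le_antisymm hQP hle])
  obtain ⟨b, hb, hbnot⟩ := Set.not_subset.1 hbexists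
  have hbQ : ∀ Q ∈ M', b ∉ Q := by
    intro Q hQ hbQ
    exact hbnot (Set.mem_biUnion (Set.Finite.mem_toFinset hM'fin |>.2 hQ) hbQ)
  have hP₂M' : P₂ ∈ M' := ⟨h2, fun h => hne (by simpa using h.symm)⟩
  -- a * b = 0
  have hab : a * b = 0 := by
    refine eq_zero_of_mem_all_minimalPrimes ?_
    intro Q hQ
    by_cases hQ1 : Q = P₁
    · rw [hQ1]; exact Ideal.mul_mem_left _ _ hb
    · refine Ideal.mul_mem_right _ _ ?_
      exact (Ideal.mem_sInf.1 ha) ⟨hQ, hQ1⟩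
  have hbP₁ : b ∈ P₁ := hb
  have hbP₂ : b ∉ P₂ := hbQ P₂ hP₂M'
  have haP₂ : a ∈ P₂ := (Ideal.mem_sInf.1 ha) hP₂M'
  -- the witness a + b avoids every minimal prime
  have hwit : (a + b) ∈ primeComplement T := by
    intro Q hQ habQ
    by_cases hQ1 : Q = P₁
    · subst hQ1
      exact haP₁ (by simpa using Q.sub_mem habQ hbP₁)
    · have haQ : a ∈ Q := (Ideal.mem_sInf.1 ha) ⟨hQ, hQ1⟩
      exact hbQ Q ⟨hQ, hQ1⟩ (by simpa using Q.sub_mem habQ haQ)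
  -- a is in the tight closure of (a+b)
  have hintc : a ∈ tightClosure p (Ideal.span {a + b}) := by
    refine ⟨a + b, hwit, 0, fun e _ => ?_⟩
    have hq : 1 ≤ p ^ e := Nat.one_le_pow _ _ (Fact.out : p.Prime).pos
    rw [add_mul_pow_eq hab hq, ← mul_add_pow_eq hab hq]
    exact Ideal.mul_mem_left _ a (fp_mem (Ideal.mem_span_singleton_self _) _)
  rw [hT] at hintc
  obtain ⟨s, hs⟩ := Ideal.mem_span_singleton'.1 hintc
  -- 1 - s ∈ P₁ and s ∈ P₂, contradiction with π proper
  have h1s : 1 - s ∈ P₁ := by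
    have : (1 - s) * a ∈ P₁ := by
      have heq : (1 - s) * a = s * b := by linear_combination -hs
      rw [heq]
      exact Ideal.mul_mem_left _ _ hbP₁
    rcases h1.1.1.mem_or_mem this with h | h
    · exact h
    · exact absurd h haP₁
  have hsP₂ : s ∈ P₂ := by
    have : s * b ∈ P₂ := by
      have heq : s * b = a - s * a := by linear_combination hs
      rw [heq]
      exact P₂.sub_mem haP₂ (Ideal.mul_mem_left _ _ haP₂)
    rcases h2.1.1.mem_or_mem this with h | h
    · exact h
    · exact absurd h hbP₂
  have : (1 : T) ∈ π := by
    have := π.add_mem (hle1 h1s) (hle2 hsP₂)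
    simpa using this
  exact hπ.ne_top (Ideal.eq_top_iff_one π |>.2 this)

/-- Main lemma: if `A` embeds into `T` with an `A`-semilinear splitting, and every ideal
of `T` is tightly closed, then every ideal of `A` is tightly closed. -/
lemma main_lemma (hT : ∀ J : Ideal T, tightClosure p J = (J : Set T))
    {A : Type*} [CommRing A] (ι : A →+* T) (hι : Function.Injective ι)
    (Φ : T → A) (hadd : ∀ x y, Φ (x + y) = Φ x + Φ y)
    (hsemi : ∀ a t, Φ (ι a * t) = a * Φ t) (hid : ∀ a, Φ (ι a) = a)
    (I : Ideal A) : tightClosure p I = (I : Set A) := by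
  refine Set.Subset.antisymm ?_ (subset_tightClosure p I)
  intro z hz
  obtain ⟨c, hc, N, hN⟩ := hz
  haveI hTred := isReduced_of_tc p hT
  haveI hAred : IsReduced A := isReduced_of_injective ι hι
  have hΦ0 : Φ 0 = 0 := by
    have := hadd 0 0
    rw [add_zero] at this
    exact (add_eq_left.1 this.symm)
  -- c is a nonzerodivisor in A
  have hnzd : ∀ x : A, x * c = 0 → x = 0 := by
    intro x hx
    refine eq_zero_of_mem_all_minimalPrimes (fun Q hQ => ?_)
    rcases hQ.1.1.mem_or_mem (show x * c ∈ Q by rw [hx]; exact Q.zero_mem) with h | h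
    · exact h
    · exact absurd h (hc Q hQ)
  set cb := ι c with hcb
  have hMfin : (minimalPrimes T).Finite := minimalPrimes.finite_of_isNoetherianRing T
  set G : Set (Ideal T) := {Q | Q ∈ minimalPrimes T ∧ cb ∉ Q} with hG
  have hGfin : G.Finite := hMfin.subset (fun Q hQ => hQ.1)
  set a : Ideal T := sInf G with ha
  -- every element of a kills cb
  have hL1 : ∀ x ∈ a, x * cb = 0 := by
    intro x hx
    refine eq_zero_of_mem_all_minimalPrimes (fun Q hQ => ?_)
    by_cases h : cb ∈ Q
    · exact Ideal.mul_mem_left _ _ h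
    · exact Ideal.mul_mem_right _ _ (Ideal.mem_sInf.1 hx ⟨hQ, h⟩)
  -- a and its annihilator are comaximal
  have hsup : a ⊔ a.annihilator = ⊤ := by
    by_contra h
    obtain ⟨𝔪, h𝔪max, hle⟩ := Ideal.exists_le_maximal _ h
    haveI h𝔪p : 𝔪.IsPrime := h𝔪max.isPrime
    obtain ⟨Q₀, hQ₀, hQ₀le⟩ := Ideal.exists_minimalPrimes_le (I := (⊥ : Ideal T)) (J := 𝔪) bot_le
    have hQ₀min : Q₀ ∈ minimalPrimes T := hQ₀
    by_cases hc0 : cb ∈ Q₀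
    · have hale : a ≤ 𝔪 := le_trans le_sup_left hle
      obtain ⟨Q, hQG, hQle⟩ := sInf_le_prime_exists hGfin h𝔪p hale
      have : Q = Q₀ := unique_minimal_le p hT h𝔪p hQG.1 hQ₀min hQle hQ₀le
      exact hQG.2 (this ▸ hc0)
    · set B : Set (Ideal T) := {Q | Q ∈ minimalPrimes T ∧ cb ∈ Q} with hB
      have hBfin : B.Finite := hMfin.subset (fun Q hQ => hQ.1)
      have hBann : sInf B ≤ a.annihilator := by
        intro u hu
        rw [Submodule.mem_annihilator]
        intro n hn
        rw [smul_eq_mul]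
        refine eq_zero_of_mem_all_minimalPrimes (fun Q hQ => ?_)
        by_cases h' : cb ∈ Q
        · exact Ideal.mul_mem_right _ _ (Ideal.mem_sInf.1 hu ⟨hQ, h'⟩)
        · exact Ideal.mul_mem_left _ _ (Ideal.mem_sInf.1 hn ⟨hQ, h'⟩)
      have hble : sInf B ≤ 𝔪 := le_trans hBann (le_trans le_sup_right hle)
      obtain ⟨Q, hQB, hQle⟩ := sInf_le_prime_exists hBfin h𝔪p hble
      have : Q = Q₀ := unique_minimal_le p hT h𝔪p hQB.1 hQ₀min hQle hQ₀le
      exact hc0 (this ▸ hQB.2)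
  -- split 1 = x + y
  have h1 : (1 : T) ∈ a ⊔ a.annihilator := hsup ▸ Submodule.mem_top
  obtain ⟨x, hxa, y, hyann, hxy1⟩ := Submodule.mem_sup.1 h1
  have hyx : ∀ t ∈ a, y * t = 0 := by
    intro t ht
    have := Submodule.mem_annihilator.1 hyann t ht
    rwa [smul_eq_mul] at this
  have hxidem : x * x = x := by
    have h2 : x * y = 0 := by rw [mul_comm]; exact hyx x hxa
    calc x * x = x * (x + y) - x * y := by ring
    _ = x := by rw [hxy1, h2, mul_one, sub_zero]
  have hxc : x * cb = 0 := hL1 x hxa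
  -- the corrected witness
  set w := cb + x with hw
  have hwmem : w ∈ primeComplement T := by
    intro Q hQ hwQ
    by_cases hcbQ : cb ∈ Q
    · have hxQ : x ∈ Q := by
        have := Q.sub_mem hwQ hcbQ
        simpa [hw] using this
      have haQ : ¬ a ≤ Q := by
        intro hle
        obtain ⟨Q', hQ'G, hQ'le⟩ := sInf_le_prime_exists hGfin hQ.1.1 hle
        have : Q = Q' := le_antisymm (hQ.2 ⟨hQ'G.1.1.1, bot_le⟩ hQ'le) hQ'le
        exact hQ'G.2 (this ▸ hcbQ)
      obtain ⟨t, hta, htQ⟩ := SetLike.not_le_iff_exists.1 haQ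
      have hyQ : y ∈ Q := by
        rcases hQ.1.1.mem_or_mem (show y * t ∈ Q by rw [hyx t hta]; exact Q.zero_mem) with h | h
        · exact h
        · exact absurd h htQ
      have : (1 : T) ∈ Q := by rw [← hxy1]; exact Q.add_mem hxQ hyQ
      exact hQ.1.1.ne_top (Ideal.eq_top_iff_one Q |>.2 this)
    · have hxQ : x ∈ Q := Ideal.mem_sInf.1 hxa ⟨hQ, hcbQ⟩
      have : cb ∈ Q := by
        have := Q.sub_mem hwQ hxQ
        simpa [hw] using this
      exact hcbQ this
  -- the key tight closure membership in T
  set K : Ideal T := Ideal.map ι I ⊔ Ideal.span {x} with hK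
  have hzK : ι z ∈ K := by
    have : ι z ∈ (K : Set T) := by
      rw [← hT K]
      refine ⟨w, hwmem, N, fun e he => ?_⟩
      have hq1 : 1 ≤ p ^ e := Nat.one_le_pow _ _ (Fact.out : p.Prime).pos
      have hterm1 : cb * (ι z) ^ p ^ e ∈ K.frobeniusPower (p ^ e) := by
        have : cb * (ι z) ^ p ^ e = ι (c * z ^ p ^ e) := by
          rw [map_mul, map_pow]
        rw [this]
        refine fp_mono le_sup_left _ (fp_map ι I (p ^ e) ?_)
        exact Ideal.mem_map_of_mem ι (hN e he)
      have hterm2 : x * (ι z) ^ p ^ e ∈ K.frobeniusPower (p ^ e) := by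
        have hxK : x * ι z ∈ K := by
          refine Ideal.mul_mem_right _ _ ?_
          exact Submodule.mem_sup_right (Ideal.mem_span_singleton_self x)
        have : (x * ι z) ^ p ^ e = x * (ι z) ^ p ^ e := by
          rw [mul_pow, idem_pow hxidem hq1]
        rw [← this]
        exact fp_mem hxK _
      have : w * (ι z) ^ p ^ e = cb * (ι z) ^ p ^ e + x * (ι z) ^ p ^ e := by
        rw [hw]; ring
      rw [this]
      exact Ideal.add_mem _ hterm1 hterm2
    exact this
  -- decompose and push down with Φ
  obtain ⟨m, hm, v, hv, hsum⟩ := Submodule.mem_sup.1 hzK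
  obtain ⟨t, ht⟩ := Ideal.mem_span_singleton'.1 hv
  -- Φ of the mapped ideal lands in I
  have hΦmap : ∀ m' ∈ Ideal.map ι I, Φ m' ∈ I := by
    set J₀ : Ideal T :=
      { carrier := {u | ∀ s : T, Φ (s * u) ∈ I}
        add_mem' := by
          intro u v hu hv s
          rw [mul_add, hadd]
          exact I.add_mem (hu s) (hv s)
        zero_mem' := by
          intro s
          rw [mul_zero, hΦ0]
          exact I.zero_mem
        smul_mem' := by
          intro r u hu s
          rw [smul_eq_mul, show s * (r * u) = (s * r) * u by ring]
          exact hu (s * r) } with hJ₀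
    have hmap2 : Ideal.map ι I ≤ J₀ := by
      rw [Ideal.map_le_iff_le_comap]
      intro i hi
      intro s
      rw [mul_comm, hsemi]
      exact I.mul_mem_right _ hi
    intro m' hm'
    have := hmap2 hm' 1
    rwa [one_mul] at this
  -- finish
  have hΦv : Φ v = 0 := by
    refine hnzd _ ?_
    have : Φ v * c = c * Φ v := by ring
    rw [this, ← hsemi c v, ← ht, show ι c * (t * x) = t * (x * cb) by rw [hcb]; ring,
      hxc, mul_zero, hΦ0]
  have : z = Φ m + Φ v := by
    rw [← hadd, hsum, hid]
  rw [this, hΦv, add_zero]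
  exact hΦmap m hm

end TC


/-- A direct summand (as an `R`-module) of an F-regular ring is F-regular. -/
theorem fRegular_of_directSummand
    (p : ℕ) [Fact p.Prime] (R : Type) [CommRing R] [IsNoetherianRing R] [CharP R p]
    (S : Type) [CommRing S] [IsNoetherianRing S] [CharP S p] [Algebra R S]
    (hinj : Function.Injective (algebraMap R S))
    (hsplit : ∃ φ : S →ₗ[R] R, ∀ r : R, φ (algebraMap R S r) = r)
    (hS : FRegular p S) :
    FRegular p R := by
  obtain ⟨φ, hφ⟩ := hsplit
  constructor
  · intro I
    refine main_lemma p hS.1 (algebraMap R S) hinj φ (map_add φ) ?_ hφ I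
    intro a t
    rw [← Algebra.smul_def, map_smul, smul_eq_mul]
  · intro U J
    set U' : Submonoid S := Algebra.algebraMapSubmonoid S U with hU'
    haveI hTnoeth : IsNoetherianRing (Localization U') :=
      IsLocalization.isNoetherianRing U' (Localization U') ‹IsNoetherianRing S›
    -- the ring map between the localizations
    set ι : Localization U →+* Localization U' :=
      IsLocalization.map (Localization U') (algebraMap R S)
        (show U ≤ U'.comap (algebraMap R S) from Submonoid.le_comap_map U) with hι
    have hιinj : Function.Injective ι := by
      rw [RingHom.injective_iff_ker_eq_bot]
      have hker := IsLocalization.ker_map (S := Localization U) (Q := Localization U') (M := U)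
        (g := algebraMap R S) (T := U') (by rw [hU']; rfl)
      have hbot : RingHom.ker (algebraMap R S) = ⊥ :=
        (RingHom.injective_iff_ker_eq_bot _).1 hinj
      rw [hbot, Ideal.map_bot] at hker
      exact hker
    -- the splitting
    set g : S →ₗ[R] Localization U' :=
      (IsScalarTower.toAlgHom R S (Localization U')).toLinearMap with hg
    haveI : IsLocalizedModule U g := by
      rw [hg, isLocalizedModule_iff_isLocalization]
      exact Localization.isLocalization
    set φ' : S →ₗ[R] Localization U := (Algebra.linearMap R (Localization U)).comp φ with hφ'
    have hu : ∀ (u : U), IsUnit (algebraMap R (Module.End R (Localization U)) u) :=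
      IsLocalizedModule.map_units (Algebra.linearMap R (Localization U))
    set Φ : Localization U' →ₗ[R] Localization U := IsLocalizedModule.lift U g φ' hu with hΦ
    have hΦg : ∀ s : S, Φ (g s) = φ' s := fun s =>
      LinearMap.congr_fun (IsLocalizedModule.lift_comp U g φ' hu) s
    have hcancel : ∀ (u : U) (x y : Localization U),
        algebraMap R (Localization U) u * x = algebraMap R (Localization U) u * y → x = y :=
      fun u x y h => (IsLocalization.map_units (Localization U) u).mul_left_cancel h
    have F1 : ∀ r : R, ι (algebraMap R (Localization U) r)
        = algebraMap R (Localization U') r := by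
      intro r
      rw [hι, IsLocalization.map_eq]
      exact (IsScalarTower.algebraMap_apply R S (Localization U') r).symm
    have F2 : ∀ (r : R) (t : Localization U'),
        algebraMap R (Localization U') r * t = r • t := fun r t => (Algebra.smul_def r t).symm
    have hsmulι : ∀ (u : R) (x : Localization U), ι (u • x) = u • ι x := by
      intro u x
      rw [Algebra.smul_def, map_mul, F1, ← Algebra.smul_def]
    -- semilinearity
    have hsemi : ∀ (x : Localization U) (t : Localization U'), Φ (ι x * t) = x * Φ t := by
      intro x t
      obtain ⟨⟨r, u⟩, rfl⟩ := IsLocalization.mk'_surjective U x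
      apply hcancel u
      have hmk : algebraMap R (Localization U) u * IsLocalization.mk' (Localization U) r u
          = algebraMap R (Localization U) r := IsLocalization.mk'_spec' _ r u
      calc algebraMap R (Localization U) u * Φ (ι (IsLocalization.mk' (Localization U) r u) * t)
          = (u : R) • Φ (ι (IsLocalization.mk' (Localization U) r u) * t) := (Algebra.smul_def _ _).symm
        _ = Φ ((u : R) • (ι (IsLocalization.mk' (Localization U) r u) * t)) := (map_smul Φ _ _).symm
        _ = Φ (((u : R) • ι (IsLocalization.mk' (Localization U) r u)) * t) := by
            rw [smul_mul_assoc]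
        _ = Φ (ι ((u : R) • IsLocalization.mk' (Localization U) r u) * t) := by rw [hsmulι]
        _ = Φ (ι (algebraMap R (Localization U) r) * t) := by
            rw [Algebra.smul_def, hmk]
        _ = Φ (r • t) := by rw [F1, F2]
        _ = r • Φ t := map_smul Φ _ _
        _ = algebraMap R (Localization U) r * Φ t := Algebra.smul_def _ _
        _ = (algebraMap R (Localization U) u * IsLocalization.mk' (Localization U) r u) * Φ t :=
            by rw [hmk]
        _ = algebraMap R (Localization U) u * (IsLocalization.mk' (Localization U) r u * Φ t) :=
            by ring
    -- splitting property
    have hid : ∀ x : Localization U, Φ (ι x) = x := by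
      intro x
      obtain ⟨⟨r, u⟩, rfl⟩ := IsLocalization.mk'_surjective U x
      apply hcancel u
      have hmk : algebraMap R (Localization U) u * IsLocalization.mk' (Localization U) r u
          = algebraMap R (Localization U) r := IsLocalization.mk'_spec' _ r u
      have halgT : algebraMap R (Localization U') r = g (algebraMap R S r) :=
        IsScalarTower.algebraMap_apply R S (Localization U') r
      calc algebraMap R (Localization U) u * Φ (ι (IsLocalization.mk' (Localization U) r u))
          = (u : R) • Φ (ι (IsLocalization.mk' (Localization U) r u)) := (Algebra.smul_def _ _).symm
        _ = Φ ((u : R) • ι (IsLocalization.mk' (Localization U) r u)) := (map_smul Φ _ _).symm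
        _ = Φ (ι ((u : R) • IsLocalization.mk' (Localization U) r u)) := by rw [hsmulι]
        _ = Φ (ι (algebraMap R (Localization U) r)) := by rw [Algebra.smul_def, hmk]
        _ = Φ (g (algebraMap R S r)) := by rw [F1, halgT]
        _ = φ' (algebraMap R S r) := hΦg _
        _ = algebraMap R (Localization U) (φ (algebraMap R S r)) := rfl
        _ = algebraMap R (Localization U) r := by rw [hφ]
        _ = algebraMap R (Localization U) u * IsLocalization.mk' (Localization U) r u := hmk.symm
    exact main_lemma p (hS.2 U') ι hιinj Φ (map_add Φ) hsemi hid J
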